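/- In any metabelian Novikov algebra A, the polynomial r(a,b,c,d) = ((a*b)*c)*d + ((b*a)*c)*d + ((c*a)*b)*d + ((d*a)*b)*c is symmetric in its four arguments. -/
import Mathlib

section Aux

variable {A : Type*} [NonUnitalNonAssocRing A]

/-- Epoly is the polynomial r(a,b,c,d). -/
def Epoly (a b c d : A) : A :=
  ((a*b)*c)*d + ((b*a)*c)*d + ((c*a)*b)*d + ((d*a)*b)*c

variable (lcom : ∀ a b c : A, a*(b*c) = b*(a*c))
variable (rsym : ∀ a b c : A, (a*b)*c - a*(b*c) = (a*c)*b - a*(c*b))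
variable (metab : ∀ a b c d : A, (a*b)*(c*d) = 0)

set_option linter.unusedSectionVars false
include lcom rsym metab

lemma k1 (a x y z : A) : a*((x*y)*z) = 0 := by
  rw [lcom a (x*y) z]; exact metab x y a z

lemma k2 (x y z w : A) : ((x*y)*z)*w = ((x*y)*w)*z := by
  have h := rsym (x*y) z w
  rw [metab x y z w, metab x y w z, sub_zero, sub_zero] at h
  exact h

lemma k4 (a d b c : A) : a*(d*(b*c)) = a*(d*(c*b)) := by
  rw [lcom a d (b*c), lcom a d (c*b)]
  have h : a*(b*c) - a*(c*b) = (a*b)*c - (a*c)*b := by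
    linear_combination (norm := abel) - rsym a b c
  have h2 : d*(a*(b*c)) - d*(a*(c*b)) = 0 := by
    rw [← mul_sub, h, mul_sub, k1 lcom rsym metab, k1 lcom rsym metab, sub_zero]
  exact sub_eq_zero.mp h2

lemma k3 (a b c d : A) : ((a*b)*c)*d = ((a*c)*b)*d := by
  have e1 : (a*(b*c))*d = -(a*(d*(b*c))) := by
    have h := rsym a (b*c) d
    rw [k1 lcom rsym metab, metab a d b c, sub_zero, zero_sub] at h
    exact h
  have e2 : (a*(c*b))*d = -(a*(d*(c*b))) := by
    have h := rsym a (c*b) d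
    rw [k1 lcom rsym metab, metab a d c b, sub_zero, zero_sub] at h
    exact h
  have h1 : (a*b)*c = a*(b*c) - a*(c*b) + (a*c)*b := by
    linear_combination (norm := abel) rsym a b c
  calc ((a*b)*c)*d = (a*(b*c) - a*(c*b) + (a*c)*b)*d := by rw [h1]
    _ = (a*(b*c))*d - (a*(c*b))*d + ((a*c)*b)*d := by rw [add_mul, sub_mul]
    _ = -(a*(d*(b*c))) - -(a*(d*(c*b))) + ((a*c)*b)*d := by rw [e1, e2]
    _ = ((a*c)*b)*d := by rw [k4 lcom rsym metab]; abel

lemma s01 (a b c d : A) : Epoly a b c d = Epoly b a c d := by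
  unfold Epoly
  rw [k3 lcom rsym metab c a b d, k3 lcom rsym metab d a b c]
  abel

lemma s12 (a b c d : A) : Epoly a b c d = Epoly a c b d := by
  unfold Epoly
  rw [k3 lcom rsym metab a b c d, k2 lcom rsym metab d a b c]
  abel

lemma s23 (a b c d : A) : Epoly a b c d = Epoly a b d c := by
  unfold Epoly
  rw [k2 lcom rsym metab a b c d, k2 lcom rsym metab b a c d]
  abel

lemma t02 (a b c d : A) : Epoly a b c d = Epoly c b a d := by
  rw [s12 lcom rsym metab, s01 lcom rsym metab, s12 lcom rsym metab]

lemma t13 (a b c d : A) : Epoly a b c d = Epoly a d c b := by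
  rw [s23 lcom rsym metab, s12 lcom rsym metab, s23 lcom rsym metab]

lemma t03 (a b c d : A) : Epoly a b c d = Epoly d b c a := by
  rw [t02 lcom rsym metab, s23 lcom rsym metab, t02 lcom rsym metab]

lemma tswap (i j : Fin 4) (hij : i ≠ j) (x : Fin 4 → A) :
    Epoly (x (Equiv.swap i j 0)) (x (Equiv.swap i j 1)) (x (Equiv.swap i j 2)) (x (Equiv.swap i j 3))
      = Epoly (x 0) (x 1) (x 2) (x 3) := by
  fin_cases i <;> fin_cases j <;>
    simp only [Equiv.swap_apply_def] <;>
    norm_num <;>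
    first
      | exact absurd rfl hij
      | exact (s01 lcom rsym metab _ _ _ _).symm
      | exact (s12 lcom rsym metab _ _ _ _).symm
      | exact (s23 lcom rsym metab _ _ _ _).symm
      | exact (t02 lcom rsym metab _ _ _ _).symm
      | exact (t13 lcom rsym metab _ _ _ _).symm
      | exact (t03 lcom rsym metab _ _ _ _).symm

lemma main (σ : Equiv.Perm (Fin 4)) :
    ∀ x : Fin 4 → A,
      Epoly (x (σ 0)) (x (σ 1)) (x (σ 2)) (x (σ 3)) = Epoly (x 0) (x 1) (x 2) (x 3) := by
  refine Equiv.Perm.swap_induction_on σ (fun x => rfl) ?_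
  intro f i j hij ih x
  have h2 := ih (x ∘ Equiv.swap i j)
  have h3 := tswap lcom rsym metab i j hij x
  simp only [Equiv.Perm.mul_apply]
  exact h2.trans h3

end Aux


/-- Setting: a nonassociative (nonunital) algebra over a field of characteristic 0. -/
theorem stmt_16 {K : Type*} [Field K] [CharZero K]
    {A : Type*} [NonUnitalNonAssocRing A] [Module K A]
    [SMulCommClass K A A] [IsScalarTower K A A]
    (lcom : ∀ a b c : A, a*(b*c) = b*(a*c))
    (rsym : ∀ a b c : A, (a*b)*c - a*(b*c) = (a*c)*b - a*(c*b))
    (metab : ∀ a b c d : A, (a*b)*(c*d) = 0) :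
    let p : A → A → A → A → A := fun a b c d : A => ((a*b)*c)*d + ((b*a)*c)*d + ((c*a)*b)*d + ((d*a)*b)*c
    ∀ (x : Fin 4 → A) (σ : Equiv.Perm (Fin 4)),
      p (x (σ 0)) (x (σ 1)) (x (σ 2)) (x (σ 3)) = p (x 0) (x 1) (x 2) (x 3) := by
  intro p x σ
  exact main lcom rsym metab σ x
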